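/- Let η, ν, c be real random variables on a probability space with ν = c·η almost surely and |η| ≤ M almost surely. Then E[|η|] ≤ (E[ν²])^{1/2} + √2·M·E[(c-1)²] + √2·(E[ν²])^{1/2}·(E[(c-1)²])^{1/2}. -/

import Mathlib

open MeasureTheory

theorem stmt_9 {Ω : Type*} [MeasurableSpace Ω] (P : Measure Ω) [IsProbabilityMeasure P]
    (η ν c : Ω → ℝ) (hη : MemLp η 2 P) (hν : MemLp ν 2 P) (hc : MemLp c 2 P)
    (M : ℝ) (hbound : ∀ᵐ ω ∂P, |η ω| ≤ M) (hfac : ∀ᵐ ω ∂P, ν ω = c ω * η ω) :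
    ∫ ω, |η ω| ∂P ≤
      Real.sqrt (∫ ω, (ν ω) ^ 2 ∂P) +
        Real.sqrt 2 * M * (∫ ω, (c ω - 1) ^ 2 ∂P) +
        Real.sqrt 2 * Real.sqrt (∫ ω, (ν ω) ^ 2 ∂P) *
          Real.sqrt (∫ ω, (c ω - 1) ^ 2 ∂P) := by
  have hc1 : MemLp (fun ω => c ω - 1) 2 P := hc.sub (memLp_const 1)
  have sqrt_add_le : ∀ a b : ℝ, 0 ≤ a → 0 ≤ b →
      Real.sqrt (a + b) ≤ Real.sqrt a + Real.sqrt b := by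
    intro a b ha hb
    have h : a + b ≤ (Real.sqrt a + Real.sqrt b)^2 := by
      have h1 := Real.sq_sqrt ha
      have h2 := Real.sq_sqrt hb
      nlinarith [Real.sqrt_nonneg a, Real.sqrt_nonneg b]
    calc Real.sqrt (a+b) ≤ Real.sqrt ((Real.sqrt a + Real.sqrt b)^2) := Real.sqrt_le_sqrt h
      _ = _ := Real.sqrt_sq (by positivity)
  have hconj : (2:ℝ).HolderConjugate 2 := Real.HolderConjugate.two_two
  have h2 : (ENNReal.ofReal (2:ℝ)) = 2 := by norm_num [ENNReal.ofReal_ofNat]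
  set V := ∫ ω, (ν ω) ^ 2 ∂P with hV
  set A := ∫ ω, (c ω - 1) ^ 2 ∂P with hA
  have hVnn : 0 ≤ V := integral_nonneg fun ω => sq_nonneg _
  have hAnn : 0 ≤ A := integral_nonneg fun ω => sq_nonneg _
  have hMnn : 0 ≤ M := by
    by_contra h
    push_neg at h
    have hae : ∀ᵐ ω ∂P, False := by
      filter_upwards [hbound] with ω hb
      exact absurd (le_trans (abs_nonneg _) hb) (not_le.mpr h)
    exact (IsProbabilityMeasure.ne_zero P) (by simpa using hae)
  -- Cauchy-Schwarz type lemma specialized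
  have CS : ∀ (f g : Ω → ℝ), MemLp f 2 P → MemLp g 2 P →
      ∫ ω, |f ω| * |g ω| ∂P ≤
        Real.sqrt (∫ ω, (f ω)^2 ∂P) * Real.sqrt (∫ ω, (g ω)^2 ∂P) := by
    intro f g hf hg
    have habs : ∀ (h : Ω → ℝ), MemLp h 2 P → MemLp (fun ω => |h ω|) 2 P := by
      intro h hh
      simpa [Real.norm_eq_abs] using hh.norm
    have := integral_mul_le_Lp_mul_Lq_of_nonneg (μ := P) hconj
      (f := fun ω => |f ω|) (g := fun ω => |g ω|)
      (Filter.Eventually.of_forall fun ω => abs_nonneg _)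
      (Filter.Eventually.of_forall fun ω => abs_nonneg _)
      (h2 ▸ habs f hf) (h2 ▸ habs g hg)
    calc ∫ ω, |f ω| * |g ω| ∂P
        ≤ (∫ ω, |f ω| ^ (2:ℝ) ∂P) ^ (1/2:ℝ) * (∫ ω, |g ω| ^ (2:ℝ) ∂P) ^ (1/2:ℝ) := this
      _ = Real.sqrt (∫ ω, (f ω)^2 ∂P) * Real.sqrt (∫ ω, (g ω)^2 ∂P) := by
          have hrpow : ∀ x : ℝ, |x| ^ (2:ℝ) = x ^ (2:ℕ) := fun x => by
            rw [show (2:ℝ) = ((2:ℕ):ℝ) by norm_num, Real.rpow_natCast, sq_abs]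
          rw [← Real.sqrt_eq_rpow, ← Real.sqrt_eq_rpow]
          simp only [hrpow]
  -- integrability facts
  have hηc1 : Integrable (fun ω => η ω * (c ω - 1)) P := by
    have : MemLp (fun ω => (c ω - 1) • η ω) 1 P :=
      hη.smul hc1 (p := 2) (q := 2) (r := 1)
    have := this.integrable le_rfl
    simpa [smul_eq_mul, mul_comm] using this
  have hνint : Integrable ν P := hν.integrable (by norm_num)
  have hηint : Integrable (fun ω => |η ω|) P := (hη.integrable (by norm_num)).abs
  -- Step 1: E|η| ≤ ∫|η(c-1)| + ∫|ν|
  have step1 : ∫ ω, |η ω| ∂P ≤ (∫ ω, |η ω| * |c ω - 1| ∂P) + ∫ ω, |ν ω| ∂P := by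
    have habs : Integrable (fun ω => |η ω| * |c ω - 1|) P :=
      hηc1.abs.congr (Filter.Eventually.of_forall fun ω => by simp [abs_mul])
    rw [← integral_add habs hνint.abs]
    refine integral_mono_ae hηint (habs.add hνint.abs) ?_
    filter_upwards [hfac] with ω hf
    have : η ω = η ω * (1 - c ω) + ν ω := by rw [hf]; ring
    calc |η ω| = |η ω * (1 - c ω) + ν ω| := by rw [← this]
      _ ≤ |η ω * (1 - c ω)| + |ν ω| := abs_add_le _ _
      _ = |η ω| * |c ω - 1| + |ν ω| := by
          rw [abs_mul, ← abs_neg (1 - c ω)]; ring_nf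
  -- Step 3: ∫|ν| ≤ √V
  have step3 : ∫ ω, |ν ω| ∂P ≤ Real.sqrt V := by
    have := CS ν (fun _ => 1) hν (memLp_const 1)
    simpa [hV] using this
  -- Step 4: ∫ η² ≤ 2M²A + 2V
  have step4 : ∫ ω, (η ω)^2 ∂P ≤ 2 * M^2 * A + 2 * V := by
    have hrhs : Integrable (fun ω => 2 * M^2 * (c ω - 1)^2 + 2 * (ν ω)^2) P :=
      (hc1.integrable_sq.const_mul _).add (hν.integrable_sq.const_mul _)
    have hmono : ∫ ω, (η ω)^2 ∂P ≤ ∫ ω, (2 * M^2 * (c ω - 1)^2 + 2 * (ν ω)^2) ∂P := by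
      refine integral_mono_ae hη.integrable_sq hrhs ?_
      filter_upwards [hfac, hbound] with ω hf hb
      have h1 : η ω = η ω * (1 - c ω) + ν ω := by rw [hf]; ring
      calc (η ω)^2 = (η ω * (1 - c ω) + ν ω)^2 := by rw [← h1]
        _ ≤ 2 * (η ω * (1 - c ω))^2 + 2 * (ν ω)^2 := by nlinarith [sq_nonneg (η ω * (1 - c ω) - ν ω)]
        _ ≤ 2 * M^2 * (c ω - 1)^2 + 2 * (ν ω)^2 := by
            have : (η ω)^2 ≤ M^2 := by
              rw [← sq_abs]; exact pow_le_pow_left₀ (abs_nonneg _) hb 2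
            nlinarith [sq_nonneg (1 - c ω)]
    calc ∫ ω, (η ω)^2 ∂P ≤ ∫ ω, (2 * M^2 * (c ω - 1)^2 + 2 * (ν ω)^2) ∂P := hmono
      _ = 2 * M^2 * A + 2 * V := by
          rw [integral_add (hc1.integrable_sq.const_mul _) (hν.integrable_sq.const_mul _),
            integral_const_mul, integral_const_mul]
  -- Step 5: √(∫η²) ≤ √2 M √A + √2 √V
  have step5 : Real.sqrt (∫ ω, (η ω)^2 ∂P) ≤
      Real.sqrt 2 * M * Real.sqrt A + Real.sqrt 2 * Real.sqrt V := by
    calc Real.sqrt (∫ ω, (η ω)^2 ∂P) ≤ Real.sqrt (2 * M^2 * A + 2 * V) := Real.sqrt_le_sqrt step4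
      _ ≤ Real.sqrt (2 * M^2 * A) + Real.sqrt (2 * V) := by
          exact sqrt_add_le _ _ (by positivity) (by positivity)
      _ = Real.sqrt 2 * M * Real.sqrt A + Real.sqrt 2 * Real.sqrt V := by
          rw [show 2 * M^2 * A = (2:ℝ) * (M^2 * A) by ring, Real.sqrt_mul (by norm_num),
            Real.sqrt_mul (sq_nonneg M), Real.sqrt_sq hMnn, Real.sqrt_mul (by norm_num)]
          ring
  -- Step 2: Cauchy-Schwarz
  have step2 : ∫ ω, |η ω| * |c ω - 1| ∂P ≤
      Real.sqrt (∫ ω, (η ω)^2 ∂P) * Real.sqrt A := CS η (fun ω => c ω - 1) hη hc1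
  -- combine
  have key : ∫ ω, |η ω| ∂P ≤
      (Real.sqrt 2 * M * Real.sqrt A + Real.sqrt 2 * Real.sqrt V) * Real.sqrt A + Real.sqrt V := by
    calc ∫ ω, |η ω| ∂P ≤ (∫ ω, |η ω| * |c ω - 1| ∂P) + ∫ ω, |ν ω| ∂P := step1
      _ ≤ Real.sqrt (∫ ω, (η ω)^2 ∂P) * Real.sqrt A + Real.sqrt V := by
          exact add_le_add step2 step3
      _ ≤ (Real.sqrt 2 * M * Real.sqrt A + Real.sqrt 2 * Real.sqrt V) * Real.sqrt A
            + Real.sqrt V := by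
          gcongr
  have hAA : Real.sqrt A * Real.sqrt A = A := Real.mul_self_sqrt hAnn
  calc ∫ ω, |η ω| ∂P
      ≤ (Real.sqrt 2 * M * Real.sqrt A + Real.sqrt 2 * Real.sqrt V) * Real.sqrt A
          + Real.sqrt V := key
    _ = Real.sqrt V + Real.sqrt 2 * M * A + Real.sqrt 2 * Real.sqrt V * Real.sqrt A := by
        rw [add_mul]
        rw [show Real.sqrt 2 * M * Real.sqrt A * Real.sqrt A
            = Real.sqrt 2 * M * (Real.sqrt A * Real.sqrt A) by ring, hAA]
        ring
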